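/- Let λ_A, λ_B, λ_C, λ_D be positive reals satisfying λ_A ∧ (λ_B + λ_C + λ_D) + λ_B ∧ (λ_C + λ_D) + λ_C ∧ λ_D = 0 in ℝ ∧_ℚ ℝ. Then λ_A ∧ λ_B ∧ λ_C ∧ λ_D = 0 in Λ⁴_ℚ ℝ and λ_A ∧ λ_B ∧ (λ_C + λ_D) = 0 in Λ³_ℚ ℝ. Consequently the ℚ-span of {λ_A, λ_B, λ_C, λ_D} has dimension at most 2 over ℚ. -/

import Mathlib

/-- The wedge product `a ∧_ℚ b` in the exterior algebra of `ℝ` over `ℚ`. -/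
noncomputable def wedge (a b : ℝ) : ExteriorAlgebra ℚ ℝ :=
  ExteriorAlgebra.ι ℚ a * ExteriorAlgebra.ι ℚ b

/-- The triple wedge product `a ∧_ℚ b ∧_ℚ c`. -/
noncomputable def wedge3 (a b c : ℝ) : ExteriorAlgebra ℚ ℝ :=
  ExteriorAlgebra.ι ℚ a * ExteriorAlgebra.ι ℚ b * ExteriorAlgebra.ι ℚ c

/-- The quadruple wedge product `a ∧_ℚ b ∧_ℚ c ∧_ℚ d`. -/
noncomputable def wedge4 (a b c d : ℝ) : ExteriorAlgebra ℚ ℝ :=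
  ExteriorAlgebra.ι ℚ a * ExteriorAlgebra.ι ℚ b * ExteriorAlgebra.ι ℚ c * ExteriorAlgebra.ι ℚ d

open ExteriorAlgebra Submodule Module

namespace SAFProof

noncomputable abbrev e (a : ℝ) : ExteriorAlgebra ℚ ℝ := ExteriorAlgebra.ι ℚ a

lemma eswap (a b : ℝ) : e a * e b = -(e b * e a) :=
  eq_neg_of_add_eq_zero_left (ι_add_mul_swap a b)

lemma t0 (a b : ℝ) : (e a * e b) * e b = 0 := by
  rw [mul_assoc, ι_sq_zero, mul_zero]

lemma t4 (a b : ℝ) : (e a * e b) * e a = 0 := by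
  rw [mul_assoc, eswap b a, mul_neg, ← mul_assoc, ι_sq_zero, zero_mul, neg_zero]

lemma t5 (a b c : ℝ) : e a * e b * e c = -(e a * e c * e b) := by
  rw [mul_assoc, eswap b c, mul_neg, mul_assoc]

lemma t1 (a b c : ℝ) : (e a * e b) * (e b * e c) = 0 := by
  rw [mul_assoc, ← mul_assoc (e b), ι_sq_zero, zero_mul, mul_zero]

lemma t2 (a b c : ℝ) : (e a * e b) * (e c * e b) = 0 := by
  rw [eswap c b, mul_neg, t1, neg_zero]

/-- The alternating 2-form built from two linear functionals. -/
noncomputable def altOf (f g : ℝ →ₗ[ℚ] ℚ) : ℝ [⋀^Fin 2]→ₗ[ℚ] ℚ where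
  toFun v := f (v 0) * g (v 1) - f (v 1) * g (v 0)
  map_update_add' v i x y := by
    fin_cases i <;>
      simp [Function.update, Fin.forall_fin_two, map_add] <;> ring
  map_update_smul' v i c x := by
    fin_cases i <;>
      simp [Function.update, map_smul, smul_eq_mul] <;> ring
  map_eq_zero_of_eq' v i j hij hne := by
    fin_cases i <;> fin_cases j <;> simp_all <;> ring

noncomputable def Phi (f g : ℝ →ₗ[ℚ] ℚ) : ExteriorAlgebra ℚ ℝ →ₗ[ℚ] ℚ :=
  liftAlternating (fun n => match n with | 2 => altOf f g | _ => 0)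

lemma Phi_wedge (f g : ℝ →ₗ[ℚ] ℚ) (a b : ℝ) :
    Phi f g (e a * e b) = f a * g b - f b * g a := by
  have h : e a * e b = ιMulti ℚ 2 ![a, b] := by
    simp [ιMulti_apply]
  rw [h, Phi, liftAlternating_apply_ιMulti]
  rfl

end SAFProof

namespace SAFProof

lemma exists_dual {s : Set ℝ} (hs : LinearIndependent ℚ ((↑) : s → ℝ)) (u : ℝ) (hu : u ∈ s) :
    ∃ f : ℝ →ₗ[ℚ] ℚ, f u = 1 ∧ ∀ v ∈ s, v ≠ u → f v = 0 := by
  classical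
  replace hs : LinearIndepOn ℚ id s := hs
  let b := Module.Basis.extend hs
  have hmem : ∀ x ∈ s, x ∈ hs.extend (Set.subset_univ s) := fun x hx =>
    hs.subset_extend _ hx
  refine ⟨b.coord ⟨u, hmem u hu⟩, ?_, ?_⟩
  · have h1 : u = b ⟨u, hmem u hu⟩ := (Module.Basis.extend_apply_self hs ⟨u, hmem u hu⟩).symm
    have h2 : b.repr u = Finsupp.single ⟨u, hmem u hu⟩ 1 := by
      rw [show b.repr u = b.repr (b ⟨u, hmem u hu⟩) from congrArg b.repr h1, Basis.repr_self]
    rw [Basis.coord_apply, h2, Finsupp.single_eq_same]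
  · intro v hv hvu
    have h1 : v = b ⟨v, hmem v hv⟩ := (Module.Basis.extend_apply_self hs ⟨v, hmem v hv⟩).symm
    have h2 : b.repr v = Finsupp.single ⟨v, hmem v hv⟩ 1 := by
      rw [show b.repr v = b.repr (b ⟨v, hmem v hv⟩) from congrArg b.repr h1, Basis.repr_self]
    rw [Basis.coord_apply, h2, Finsupp.single_apply]
    simp [Subtype.ext_iff, hvu]

lemma range_triple (u v w : ℝ) : Set.range ![u, v, w] = {u, v, w} := by
  ext y
  constructor
  · rintro ⟨i, rfl⟩; fin_cases i <;> simp
  · rintro (rfl | rfl | rfl)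
    exacts [⟨0, rfl⟩, ⟨1, rfl⟩, ⟨2, rfl⟩]

lemma full (u v w x : ℝ) (h : LinearIndependent ℚ ![u, v, w])
    (e1 e2 e3 e4 e5 e6 : ℚ) (hodd : e1 * e6 - e2 * e5 + e3 * e4 ≠ 0)
    (heq : e1 • (e u * e v) + e2 • (e u * e w) + e3 • (e v * e w)
      + e4 • (e u * e x) + e5 • (e v * e x) + e6 • (e w * e x) = 0) : False := by
  have hinj := h.injective
  have huv : u ≠ v := fun hh => by
    have : (0 : Fin 3) = 1 := hinj (by simpa using hh)
    simp at this
  have huw : u ≠ w := fun hh => by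
    have : (0 : Fin 3) = 2 := hinj (by simpa using hh)
    simp at this
  have hvw : v ≠ w := fun hh => by
    have : (1 : Fin 3) = 2 := hinj (by simpa using hh)
    simp at this
  have hs : LinearIndependent ℚ ((↑) : ({u, v, w} : Set ℝ) → ℝ) := by
    have := (linearIndepOn_id_range_iff h.injective).mpr h
    rwa [range_triple] at this
  obtain ⟨f, hfu, hf0⟩ := exists_dual hs u (by simp)
  obtain ⟨g, hgv, hg0⟩ := exists_dual hs v (by simp)
  obtain ⟨k, hkw, hk0⟩ := exists_dual hs w (by simp)
  have hfv : f v = 0 := hf0 v (by simp) (Ne.symm huv)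
  have hfw : f w = 0 := hf0 w (by simp) (Ne.symm huw)
  have hgu : g u = 0 := hg0 u (by simp) huv
  have hgw : g w = 0 := hg0 w (by simp) (Ne.symm hvw)
  have hku : k u = 0 := hk0 u (by simp) huw
  have hkv : k v = 0 := hk0 v (by simp) hvw
  have eA := congrArg (Phi f g) heq
  have eB := congrArg (Phi f k) heq
  have eC := congrArg (Phi g k) heq
  simp only [map_add, map_smul, Phi_wedge, map_zero, hfu, hfv, hfw, hgu, hgv, hgw, hku, hkv,
    hkw, smul_eq_mul] at eA eB eC
  apply hodd
  linear_combination e6 * eA - e5 * eB + e4 * eC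

end SAFProof

open SAFProof

set_option maxHeartbeats 1600000 in
theorem stmt6 (lA lB lC lD : ℝ) (hA : 0 < lA) (hB : 0 < lB) (hC : 0 < lC) (hD : 0 < lD)
    (hSAF : wedge lA (lB + lC + lD) + wedge lB (lC + lD) + wedge lC lD = 0) :
    wedge4 lA lB lC lD = 0 ∧ wedge3 lA lB (lC + lD) = 0 ∧
      Module.finrank ℚ (Submodule.span ℚ ({lA, lB, lC, lD} : Set ℝ)) ≤ 2 := by
  classical
  have hS : e lA * e lB + e lA * e lC + e lA * e lD + e lB * e lC + e lB * e lD
      + e lC * e lD = 0 := by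
    have h := hSAF
    simp only [wedge, map_add, mul_add] at h
    rw [← h]; abel
  refine ⟨?_, ?_, ?_⟩
  · -- wedge4
    have h4 := congrArg (fun z => z * (e lC * e lD)) hS
    simp only [add_mul, zero_mul] at h4
    rw [t1, t2, t1, t2, t2] at h4
    simpa [wedge4, mul_assoc] using h4
  · -- wedge3
    have h3 := congrArg (fun z => z * ExteriorAlgebra.ι ℚ (lC + lD)) hSAF
    simp only [add_mul, zero_mul] at h3
    have q1 : wedge lA (lB + lC + lD) * ExteriorAlgebra.ι ℚ (lC + lD)
        = wedge3 lA lB (lC + lD) := by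
      simp only [wedge, wedge3, add_assoc, map_add, mul_add, add_mul, t0, add_zero,
        mul_zero, zero_add]
      rw [t5 lA lD lC]
      abel
    have q2 : wedge lB (lC + lD) * ExteriorAlgebra.ι ℚ (lC + lD) = 0 := by
      rw [wedge]; exact t0 _ _
    have q3 : wedge lC lD * ExteriorAlgebra.ι ℚ (lC + lD) = 0 := by
      simp only [wedge, map_add, mul_add, t0, t4, add_zero]
    rw [q1, q2, q3, add_zero, add_zero] at h3
    exact h3
  · -- rank
    by_contra hrank
    push_neg at hrank
    have hv : ({lA, lB, lC, lD} : Set ℝ) = Set.range ![lA, lB, lC, lD] := by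
      ext y; constructor
      · rintro (rfl | rfl | rfl | rfl)
        exacts [⟨0, rfl⟩, ⟨1, rfl⟩, ⟨2, rfl⟩, ⟨3, rfl⟩]
      · rintro ⟨i, rfl⟩; fin_cases i <;> simp
    set v : Fin 4 → ℝ := ![lA, lB, lC, lD] with hvdef
    set φ : (Fin 4 → ℚ) →ₗ[ℚ] ℝ := Fintype.linearCombination ℚ v with hφ
    have hrange : LinearMap.range φ = Submodule.span ℚ (Set.range v) :=
      Fintype.range_linearCombination ℚ v
    have hrn : Module.finrank ℚ (LinearMap.range φ) + Module.finrank ℚ (LinearMap.ker φ)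
        = 4 := by
      rw [LinearMap.finrank_range_add_finrank_ker]
      simp [Module.finrank_fin_fun]
    have hker : Module.finrank ℚ (LinearMap.ker φ) ≤ 1 := by
      rw [hv] at hrank
      have h2 : 2 < Module.finrank ℚ (LinearMap.range φ) := by rw [hrange]; exact hrank
      omega
    have hφsum : ∀ d : Fin 4 → ℚ, φ d = d 0 • lA + d 1 • lB + d 2 • lC + d 3 • lD := by
      intro d
      rw [hφ, Fintype.linearCombination_apply, Fin.sum_univ_four]
      simp [hvdef]
    have hp : ∃ p : Fin 4, ∀ d : Fin 4 → ℚ, φ d = 0 → d p = 0 → d = 0 := by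
      by_cases hk : LinearMap.ker φ = ⊥
      · refine ⟨3, fun d h1 _ => ?_⟩
        have hmem : d ∈ LinearMap.ker φ := h1
        rw [hk] at hmem
        simpa using hmem
      · obtain ⟨c, hcker, hc0⟩ := (Submodule.ne_bot_iff _).mp hk
        obtain ⟨p, hcp⟩ : ∃ p, c p ≠ 0 := by
          by_contra hall; push_neg at hall; exact hc0 (funext hall)
        have hsp : Submodule.span ℚ {c} ≤ LinearMap.ker φ := by
          rw [Submodule.span_singleton_le_iff_mem]; exact hcker
        have heqk : Submodule.span ℚ {c} = LinearMap.ker φ := by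
          apply Submodule.eq_of_le_of_finrank_le hsp
          rw [finrank_span_singleton hc0]; exact hker
        refine ⟨p, fun d h1 h2 => ?_⟩
        have hd : d ∈ Submodule.span ℚ ({c} : Set (Fin 4 → ℚ)) := by rw [heqk]; exact h1
        obtain ⟨q, rfl⟩ := Submodule.mem_span_singleton.mp hd
        have hqc : q * c p = 0 := h2
        rcases mul_eq_zero.mp hqc with h | h
        · rw [h, zero_smul]
        · exact absurd h hcp
    obtain ⟨p, hp⟩ := hp
    fin_cases p
    · -- p = 0 : triple lB lC lD, extra lA
      have hind : LinearIndependent ℚ ![lB, lC, lD] := by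
        rw [Fintype.linearIndependent_iff]
        intro g hg
        simp [Fin.sum_univ_three] at hg
        have hd : (![0, g 0, g 1, g 2] : Fin 4 → ℚ) = 0 := by
          apply hp
          · rw [hφsum]; simpa using hg
          · rfl
        intro i; fin_cases i
        · simpa using congrFun hd 1
        · simpa using congrFun hd 2
        · simpa using congrFun hd 3
      apply full lB lC lD lA hind 1 1 1 (-1) (-1) (-1) (by norm_num)
      have key : (1:ℚ) • (e lB * e lC) + (1:ℚ) • (e lB * e lD) + (1:ℚ) • (e lC * e lD)
          + (-1:ℚ) • (e lB * e lA) + (-1:ℚ) • (e lC * e lA) + (-1:ℚ) • (e lD * e lA)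
          = e lA * e lB + e lA * e lC + e lA * e lD + e lB * e lC + e lB * e lD
            + e lC * e lD := by
        rw [eswap lB lA, eswap lC lA, eswap lD lA]
        module
      exact key.trans hS
    · -- p = 1 : triple lA lC lD, extra lB
      have hind : LinearIndependent ℚ ![lA, lC, lD] := by
        rw [Fintype.linearIndependent_iff]
        intro g hg
        simp [Fin.sum_univ_three] at hg
        have hd : (![g 0, 0, g 1, g 2] : Fin 4 → ℚ) = 0 := by
          apply hp
          · rw [hφsum]; simpa using hg
          · rfl
        intro i; fin_cases i
        · simpa using congrFun hd 0
        · simpa using congrFun hd 2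
        · simpa using congrFun hd 3
      apply full lA lC lD lB hind 1 1 1 1 (-1) (-1) (by norm_num)
      have key : (1:ℚ) • (e lA * e lC) + (1:ℚ) • (e lA * e lD) + (1:ℚ) • (e lC * e lD)
          + (1:ℚ) • (e lA * e lB) + (-1:ℚ) • (e lC * e lB) + (-1:ℚ) • (e lD * e lB)
          = e lA * e lB + e lA * e lC + e lA * e lD + e lB * e lC + e lB * e lD
            + e lC * e lD := by
        rw [eswap lC lB, eswap lD lB]
        module
      exact key.trans hS
    · -- p = 2 : triple lA lB lD, extra lC
      have hind : LinearIndependent ℚ ![lA, lB, lD] := by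
        rw [Fintype.linearIndependent_iff]
        intro g hg
        simp [Fin.sum_univ_three] at hg
        have hd : (![g 0, g 1, 0, g 2] : Fin 4 → ℚ) = 0 := by
          apply hp
          · rw [hφsum]; simpa using hg
          · rfl
        intro i; fin_cases i
        · simpa using congrFun hd 0
        · simpa using congrFun hd 1
        · simpa using congrFun hd 3
      apply full lA lB lD lC hind 1 1 1 1 1 (-1) (by norm_num)
      have key : (1:ℚ) • (e lA * e lB) + (1:ℚ) • (e lA * e lD) + (1:ℚ) • (e lB * e lD)
          + (1:ℚ) • (e lA * e lC) + (1:ℚ) • (e lB * e lC) + (-1:ℚ) • (e lD * e lC)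
          = e lA * e lB + e lA * e lC + e lA * e lD + e lB * e lC + e lB * e lD
            + e lC * e lD := by
        rw [eswap lD lC]
        module
      exact key.trans hS
    · -- p = 3 : triple lA lB lC, extra lD
      have hind : LinearIndependent ℚ ![lA, lB, lC] := by
        rw [Fintype.linearIndependent_iff]
        intro g hg
        simp [Fin.sum_univ_three] at hg
        have hd : (![g 0, g 1, g 2, 0] : Fin 4 → ℚ) = 0 := by
          apply hp
          · rw [hφsum]; simpa using hg
          · rfl
        intro i; fin_cases i
        · simpa using congrFun hd 0
        · simpa using congrFun hd 1
        · simpa using congrFun hd 2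
      apply full lA lB lC lD hind 1 1 1 1 1 1 (by norm_num)
      have key : (1:ℚ) • (e lA * e lB) + (1:ℚ) • (e lA * e lC) + (1:ℚ) • (e lB * e lC)
          + (1:ℚ) • (e lA * e lD) + (1:ℚ) • (e lB * e lD) + (1:ℚ) • (e lC * e lD)
          = e lA * e lB + e lA * e lC + e lA * e lD + e lB * e lC + e lB * e lD
            + e lC * e lD := by
        module
      exact key.trans hS
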